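/- Let M = [[0,1,2,2,1,0],[0,0,1,2,2,1],[1,0,0,1,2,2],[2,1,0,0,1,2],[2,2,1,0,0,1],[1,2,2,1,0,0]], U = [[1,0,0,1,0],[2,0,0,0,1],[1,0,1,0,0],[0,1,1,0,0],[0,2,0,0,1],[0,1,0,1,0]], and V = [[0,0,0,1,1,0],[1,1,0,0,0,0],[1,0,0,0,1,2],[0,1,2,1,0,0],[0,0,1,0,0,1]]. Then U and V are entrywise nonnegative, M = U·V (so rank₊(M) ≤ 5), and the linear-algebraic rank of U equals 4. -/
import Mathlib

set_option maxHeartbeats 1000000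

private lemma cons_val_five' {α : Type*} {m : ℕ} (x : α) (u : Fin (m + 5) → α) :
    Matrix.vecCons x u 5 =
      Matrix.vecHead (Matrix.vecTail (Matrix.vecTail (Matrix.vecTail (Matrix.vecTail u)))) :=
  rfl

/-- The limit hexagon matrix `M = lim_{a→∞} M_a` admits the explicit exact
nonnegative factorization `M = U * V` with inner dimension 5, where
`rank U = 4`. -/
theorem limit_hexagon_factorization :
    let M : Matrix (Fin 6) (Fin 6) ℝ :=
      !![0, 1, 2, 2, 1, 0;
         0, 0, 1, 2, 2, 1;
         1, 0, 0, 1, 2, 2;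
         2, 1, 0, 0, 1, 2;
         2, 2, 1, 0, 0, 1;
         1, 2, 2, 1, 0, 0]
    let U : Matrix (Fin 6) (Fin 5) ℝ :=
      !![1, 0, 0, 1, 0;
         2, 0, 0, 0, 1;
         1, 0, 1, 0, 0;
         0, 1, 1, 0, 0;
         0, 2, 0, 0, 1;
         0, 1, 0, 1, 0]
    let V : Matrix (Fin 5) (Fin 6) ℝ :=
      !![0, 0, 0, 1, 1, 0;
         1, 1, 0, 0, 0, 0;
         1, 0, 0, 0, 1, 2;
         0, 1, 2, 1, 0, 0;
         0, 0, 1, 0, 0, 1]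
    (∀ i k, 0 ≤ U i k) ∧ (∀ k j, 0 ≤ V k j) ∧ M = U * V ∧ U.rank = 4 := by
  intro M U V
  refine ⟨?_, ?_, ?_, ?_⟩
  · intro i k; fin_cases i <;> fin_cases k <;> norm_num [U]
  · intro k j; fin_cases k <;> fin_cases j <;> norm_num [V]
  · ext i j
    fin_cases i <;> fin_cases j <;>
      norm_num [M, U, V, Matrix.mul_apply, Fin.sum_univ_five, Fin.sum_univ_six,
        Matrix.cons_val_zero, Matrix.cons_val_one, Matrix.cons_val_two,
        Matrix.cons_val_three, Matrix.cons_val_four, cons_val_five',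
        Matrix.head_cons, Matrix.vecHead, Matrix.vecTail]
  · have hle : U.rank ≤ 4 := by
      have hfac : U = (!![1, 0, 1, 0;
                         2, 0, 0, 1;
                         1, 1, 0, 0;
                         0, 1, 0, 0;
                         0, 0, 0, 1;
                         0, 0, 1, 0] : Matrix (Fin 6) (Fin 4) ℝ) *
                      (!![1, -1, 0, 0, 0;
                          0, 1, 1, 0, 0;
                          0, 1, 0, 1, 0;
                          0, 2, 0, 0, 1] : Matrix (Fin 4) (Fin 5) ℝ) := by
        ext i j
        fin_cases i <;> fin_cases j <;>
          norm_num [U, Matrix.mul_apply, Fin.sum_univ_four,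
            Matrix.cons_val_zero, Matrix.cons_val_one, Matrix.cons_val_two,
            Matrix.cons_val_three, Matrix.cons_val_four, cons_val_five',
            Matrix.head_cons, Matrix.vecHead, Matrix.vecTail]
      have h := Matrix.rank_mul_le_left
        (!![1, 0, 1, 0;
           2, 0, 0, 1;
           1, 1, 0, 0;
           0, 1, 0, 0;
           0, 0, 0, 1;
           0, 0, 1, 0] : Matrix (Fin 6) (Fin 4) ℝ)
        (!![1, -1, 0, 0, 0;
            0, 1, 1, 0, 0;
            0, 1, 0, 1, 0;
            0, 2, 0, 0, 1] : Matrix (Fin 4) (Fin 5) ℝ)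
      rw [← hfac] at h
      exact h.trans ((Matrix.rank_le_card_width _).trans (by simp))
    have hge : 4 ≤ U.rank := by
      have hPU : (!![0, 0, 1, -1, 0, 0;
                     0, 0, 0, 1, 0, 0;
                     0, 0, 0, 0, 0, 1;
                     0, 0, 0, 0, 1, 0] : Matrix (Fin 4) (Fin 6) ℝ) * U =
          (!![1, -1, 0, 0, 0;
              0, 1, 1, 0, 0;
              0, 1, 0, 1, 0;
              0, 2, 0, 0, 1] : Matrix (Fin 4) (Fin 5) ℝ) := by
        ext i j
        fin_cases i <;> fin_cases j <;>
          norm_num [U, Matrix.mul_apply, Fin.sum_univ_six,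
            Matrix.cons_val_zero, Matrix.cons_val_one, Matrix.cons_val_two,
            Matrix.cons_val_three, Matrix.cons_val_four, cons_val_five',
            Matrix.head_cons, Matrix.vecHead, Matrix.vecTail]
      have h1 : (!![0, 0, 1, -1, 0, 0;
                     0, 0, 0, 1, 0, 0;
                     0, 0, 0, 0, 0, 1;
                     0, 0, 0, 0, 1, 0] : Matrix (Fin 4) (Fin 6) ℝ) * U *
          (!![1, 0, 0, 0;
             0, 0, 0, 0;
             0, 1, 0, 0;
             0, 0, 1, 0;
             0, 0, 0, 1] : Matrix (Fin 5) (Fin 4) ℝ) = 1 := by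
        rw [hPU]
        ext i j
        fin_cases i <;> fin_cases j <;>
          norm_num [Matrix.mul_apply, Fin.sum_univ_five, Matrix.one_apply, Fin.ext_iff,
            Matrix.cons_val_zero, Matrix.cons_val_one, Matrix.cons_val_two,
            Matrix.cons_val_three, Matrix.cons_val_four, cons_val_five',
            Matrix.head_cons, Matrix.vecHead, Matrix.vecTail]
      have h4 : ((!![0, 0, 1, -1, 0, 0;
                     0, 0, 0, 1, 0, 0;
                     0, 0, 0, 0, 0, 1;
                     0, 0, 0, 0, 1, 0] : Matrix (Fin 4) (Fin 6) ℝ) * U *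
          (!![1, 0, 0, 0;
             0, 0, 0, 0;
             0, 1, 0, 0;
             0, 0, 1, 0;
             0, 0, 0, 1] : Matrix (Fin 5) (Fin 4) ℝ)).rank = 4 := by
        rw [h1, Matrix.rank_one]; simp
      calc (4 : ℕ) = _ := h4.symm
        _ ≤ _ := Matrix.rank_mul_le_left _ _
        _ ≤ U.rank := Matrix.rank_mul_le_right _ _
    omega
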